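/- Let C ∈ ℝ^{n1×r×n3} and let S ∈ ℝ^{r×r×n3} be f-diagonal. Then the Frobenius norm of their t-product satisfies ‖C * S‖_F ≤ ‖C‖_{1,F} · ‖S‖_F. -/

import Mathlib

open scoped BigOperators Matrix Kronecker ComplexConjugate
open Complex

/-- A third-order tensor of size `n1 × n2 × n3` with entries in `R`. -/
abbrev T3 (n1 n2 n3 : ℕ) (R : Type*) : Type _ := Fin n1 → Fin n2 → Fin n3 → R

namespace T3

variable {n1 n2 n3 l : ℕ}

/-- The Frobenius inner product `⟨A,B⟩ = Σ_{i,j,k} A_{ijk} B_{ijk}`. -/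
def tInner (A B : T3 n1 n2 n3 ℝ) : ℝ := ∑ i, ∑ j, ∑ k, A i j k * B i j k

/-- The Frobenius norm `‖A‖_F = √⟨A,A⟩`. -/
noncomputable def tNorm (A : T3 n1 n2 n3 ℝ) : ℝ := Real.sqrt (tInner A A)

/-- The `n × n` DFT matrix, `(F_n)_{ab} = ω^{ab}` (0-based), `ω = exp(-2πi/n)`. -/
noncomputable def dftMatrix (n : ℕ) : Matrix (Fin n) (Fin n) ℂ :=
  fun a b => Complex.exp (-(2 * (Real.pi : ℂ) * Complex.I) / (n : ℂ)) ^ ((a : ℕ) * (b : ℕ))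

/-- The `k`-th frontal slice `Â^{(k)}` of the DFT of `A` along the third dimension:
`Â(i,j,:) = F_{n3} · A(i,j,:)`. -/
noncomputable def hatSlice (A : T3 n1 n2 n3 ℝ) (k : Fin n3) : Matrix (Fin n1) (Fin n2) ℂ :=
  fun i j => ∑ m : Fin n3, dftMatrix n3 k m * (A i j m : ℂ)

/-- The block circulant matrix of `A`: the `(p,q)` block (0-based) is the frontal
slice `A^{(p-q mod n3)}`. -/
def bcirc (A : T3 n1 n2 n3 ℝ) : Matrix (Fin n3 × Fin n1) (Fin n3 × Fin n2) ℝ :=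
  fun p q => A p.2 q.2 (p.1 - q.1)

/-- The block diagonal matrix with diagonal blocks `Â^{(1)}, …, Â^{(n3)}`. -/
noncomputable def bdiag (A : T3 n1 n2 n3 ℝ) : Matrix (Fin n3 × Fin n1) (Fin n3 × Fin n2) ℂ :=
  fun p q => if p.1 = q.1 then hatSlice A p.1 p.2 q.2 else 0

/-- t-product: `(A*B)^{(k)} = Σ_q A^{(k-q mod n3)} B^{(q)}` (circular convolution of slices). -/
def tprod (A : T3 n1 n2 n3 ℝ) (B : T3 n2 l n3 ℝ) : T3 n1 l n3 ℝ :=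
  fun i j k => ∑ q : Fin n3, ∑ p : Fin n2, A i p (k - q) * B p j q

/-- Tensor transpose: `(Aᵀ)^{(k)} = (A^{(-k mod n3)})ᵀ`. -/
def tT (A : T3 n1 n2 n3 ℝ) : T3 n2 n1 n3 ℝ := fun j i k => A i j (-k)

/-- The identity tensor: first frontal slice the identity matrix, other slices zero. -/
def tI (q m : ℕ) : T3 q q m ℝ := fun i j k => if i = j ∧ (k : ℕ) = 0 then 1 else 0

/-- An orthogonal tensor: `Qᵀ * Q = Q * Qᵀ = I`. -/
def TOrth {n m : ℕ} (Q : T3 n n m ℝ) : Prop :=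
  tprod (tT Q) Q = tI n m ∧ tprod Q (tT Q) = tI n m

/-- A partially orthogonal tensor: `Qᵀ * Q = I`. -/
def PartOrth {n q m : ℕ} (Q : T3 n q m ℝ) : Prop := tprod (tT Q) Q = tI q m

/-- f-diagonal tensor: every frontal slice is a diagonal matrix. -/
def FDiag (S : T3 n1 n2 n3 ℝ) : Prop :=
  ∀ (i : Fin n1) (j : Fin n2) (k : Fin n3), (i : ℕ) ≠ (j : ℕ) → S i j k = 0

/-- Every Fourier-domain frontal slice of `S` has real, nonnegative, nonincreasing
diagonal entries. -/
def OrderedDiag (S : T3 n1 n2 n3 ℝ) : Prop :=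
  ∀ k : Fin n3,
    (∀ (i : Fin n1) (j : Fin n2), (i : ℕ) = (j : ℕ) →
      (hatSlice S k i j).im = 0 ∧ 0 ≤ (hatSlice S k i j).re) ∧
    (∀ (i i' : Fin n1) (j j' : Fin n2), (i : ℕ) = (j : ℕ) → (i' : ℕ) = (j' : ℕ) →
      (i : ℕ) ≤ (i' : ℕ) → (hatSlice S k i' j').re ≤ (hatSlice S k i j).re)

/-- A t-SVD of `A`: `A = U * S * Vᵀ` with `U, V` orthogonal and `S` f-diagonal. -/
def IsTSVD (A : T3 n1 n2 n3 ℝ) (U : T3 n1 n1 n3 ℝ) (S : T3 n1 n2 n3 ℝ)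
    (V : T3 n2 n2 n3 ℝ) : Prop :=
  TOrth U ∧ TOrth V ∧ FDiag S ∧ A = tprod (tprod U S) (tT V)

/-- An ordered t-SVD. -/
def IsOrderedTSVD (A : T3 n1 n2 n3 ℝ) (U : T3 n1 n1 n3 ℝ) (S : T3 n1 n2 n3 ℝ)
    (V : T3 n2 n2 n3 ℝ) : Prop :=
  IsTSVD A U S V ∧ OrderedDiag S

/-- Lateral slice `U(:,i,:)` as an `n1 × 1 × n3` tensor. -/
def lat (U : T3 n1 n2 n3 ℝ) (i : Fin n2) : T3 n1 1 n3 ℝ := fun a _ k => U a i k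

/-- Tube `S(i,j,:)` as a `1 × 1 × n3` tensor. -/
def tube (S : T3 n1 n2 n3 ℝ) (i : Fin n1) (j : Fin n2) : T3 1 1 n3 ℝ := fun _ _ k => S i j k

/-- The rank-one term `U(:,i,:) * S(i,j,:) * V(:,j,:)ᵀ`. -/
def rankOne (U : T3 n1 n1 n3 ℝ) (S : T3 n1 n2 n3 ℝ) (V : T3 n2 n2 n3 ℝ)
    (i : Fin n1) (j : Fin n2) : T3 n1 n2 n3 ℝ :=
  tprod (tprod (lat U i) (tube S i j)) (tT (lat V j))

/-- The normalized leading rank-one tensor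
`M₁ = U(:,1,:) * (S(1,1,:)/‖S(1,1,:)‖_F) * V(:,1,:)ᵀ`. -/
noncomputable def leadM (hn1 : 0 < n1) (hn2 : 0 < n2) (U : T3 n1 n1 n3 ℝ)
    (S : T3 n1 n2 n3 ℝ) (V : T3 n2 n2 n3 ℝ) : T3 n1 n2 n3 ℝ :=
  tprod (tprod (lat U ⟨0, hn1⟩)
      (fun _ _ k => S ⟨0, hn1⟩ ⟨0, hn2⟩ k / tNorm (tube S ⟨0, hn1⟩ ⟨0, hn2⟩)))
    (tT (lat V ⟨0, hn2⟩))

/-- `‖Y‖_{1,F}`: the maximal Euclidean norm of a column fiber of a frontal slice of `Ŷ`. -/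
noncomputable def norm1F (Y : T3 n1 n2 n3 ℝ) : ℝ :=
  ⨆ p : Fin n2 × Fin n3, Real.sqrt (∑ i, ‖hatSlice Y p.2 i p.1‖ ^ 2)

/-- The tubal rank: the maximal rank of a frontal slice of the third-mode DFT. -/
noncomputable def tubalRank (X : T3 n1 n2 n3 ℝ) : ℕ :=
  Finset.univ.sup fun k : Fin n3 => (hatSlice X k).rank

end T3

open T3


noncomputable def omg (n : ℕ) : ℂ :=
  Complex.exp (-(2 * (Real.pi : ℂ) * Complex.I) / (n : ℂ))

lemma omg_prim {n : ℕ} (hn : n ≠ 0) : IsPrimitiveRoot (omg n) n := by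
  have h := Complex.isPrimitiveRoot_exp n hn
  have he : omg n = (Complex.exp (2 * (Real.pi : ℂ) * Complex.I / (n : ℂ)))⁻¹ := by
    rw [← Complex.exp_neg, omg, neg_div]
  rw [he]
  exact h.inv

lemma omg_pow_mod {n : ℕ} (hn : n ≠ 0) {a b : ℕ} (hab : a ≡ b [MOD n]) :
    omg n ^ a = omg n ^ b := by
  have h := omg_prim hn
  have hpow : ∀ a : ℕ, omg n ^ a = omg n ^ (a % n) := by
    intro a
    conv_lhs => rw [← Nat.div_add_mod a n]
    rw [pow_add, pow_mul, h.pow_eq_one, one_pow, one_mul]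
  rw [hpow a, hpow b]
  exact congrArg (omg n ^ ·) (hab : a % n = b % n)

lemma conj_omg (n : ℕ) : conj (omg n) = (omg n)⁻¹ := by
  rw [omg, ← Complex.exp_conj, ← Complex.exp_neg]
  congr 1
  simp [map_div₀, map_ofNat]
  ring

lemma sum_omg_zpow {n : ℕ} (hn : n ≠ 0) (d : ℤ) :
    ∑ k : Fin n, (omg n ^ d) ^ (k : ℕ) = if (n : ℤ) ∣ d then (n : ℂ) else 0 := by
  have h := omg_prim hn
  by_cases hd : (n : ℤ) ∣ d
  · rw [if_pos hd]
    have h1 : omg n ^ d = 1 := (h.zpow_eq_one_iff_dvd d).2 hd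
    simp [h1]
  · rw [if_neg hd]
    have hne : omg n ^ d ≠ 1 := fun hone => hd ((h.zpow_eq_one_iff_dvd d).1 hone)
    rw [Fin.sum_univ_eq_sum_range (fun k => (omg n ^ d) ^ k), geom_sum_eq hne]
    have h2 : (omg n ^ d) ^ n = 1 := by
      rw [← zpow_natCast (omg n ^ d), ← zpow_mul, mul_comm, zpow_mul, zpow_natCast,
        h.pow_eq_one, one_zpow]
    rw [h2]
    simp

lemma omg_pairing {n : ℕ} (hn : n ≠ 0) (m m' : Fin n) :
    ∑ k : Fin n, omg n ^ ((k : ℕ) * (m : ℕ)) * conj (omg n ^ ((k : ℕ) * (m' : ℕ)))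
      = if m = m' then (n : ℂ) else 0 := by
  have key : ∀ k : Fin n, omg n ^ ((k : ℕ) * (m : ℕ)) * conj (omg n ^ ((k : ℕ) * (m' : ℕ)))
      = (omg n ^ ((m : ℤ) - (m' : ℤ))) ^ (k : ℕ) := by
    intro k
    rw [map_pow, conj_omg, ← zpow_natCast (omg n), ← zpow_natCast ((omg n)⁻¹), inv_zpow,
      ← zpow_neg, ← zpow_add₀ (by
        intro h0
        have := omg_prim hn
        exact this.ne_zero hn h0), ← zpow_natCast (omg n ^ ((m : ℤ) - (m' : ℤ))), ← zpow_mul]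
    congr 1
    push_cast
    ring
  simp_rw [key, sum_omg_zpow hn]
  have hiff : (n : ℤ) ∣ ((m : ℤ) - (m' : ℤ)) ↔ m = m' := by
    constructor
    · intro hdvd
      have h1 : ((m : ℤ) - (m' : ℤ)) = 0 := by
        rcases hdvd with ⟨c, hc⟩
        have hm := m.isLt
        have hm' := m'.isLt
        rcases lt_trichotomy c 0 with hc0 | hc0 | hc0
        · nlinarith [Int.le_of_lt_add_one (by omega : c < 0 + 1)]
        · rw [hc, hc0, mul_zero]
        · nlinarith
      have : (m : ℤ) = (m' : ℤ) := by linarith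
      exact Fin.ext (by exact_mod_cast this)
    · rintro rfl; simp
  rw [if_congr hiff rfl rfl]

lemma parseval_fiber_c {n : ℕ} (hn : n ≠ 0) (x : Fin n → ℝ) :
    ∑ k : Fin n, (∑ m : Fin n, omg n ^ ((k : ℕ) * (m : ℕ)) * (x m : ℂ)) *
        conj (∑ m : Fin n, omg n ^ ((k : ℕ) * (m : ℕ)) * (x m : ℂ))
      = (n : ℂ) * ∑ m : Fin n, (x m : ℂ) ^ 2 := by
  have key : ∀ k : Fin n, (∑ m : Fin n, omg n ^ ((k : ℕ) * (m : ℕ)) * (x m : ℂ)) *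
        conj (∑ m : Fin n, omg n ^ ((k : ℕ) * (m : ℕ)) * (x m : ℂ))
      = ∑ m : Fin n, ∑ m' : Fin n, ((x m : ℂ) * (x m' : ℂ)) *
          (omg n ^ ((k : ℕ) * (m : ℕ)) * conj (omg n ^ ((k : ℕ) * (m' : ℕ)))) := by
    intro k
    rw [map_sum, Finset.sum_mul_sum]
    refine Finset.sum_congr rfl fun m _ => Finset.sum_congr rfl fun m' _ => ?_
    rw [map_mul, Complex.conj_ofReal]
    ring
  simp_rw [key]
  rw [Finset.sum_comm]
  conv_lhs => enter [2, m]; rw [Finset.sum_comm]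
  simp_rw [← Finset.mul_sum, omg_pairing hn]
  simp [mul_ite, Finset.sum_ite_eq', Finset.mul_sum, pow_two]
  refine Finset.sum_congr rfl fun m _ => ?_
  ring

lemma parseval_fiber {n : ℕ} (hn : n ≠ 0) (x : Fin n → ℝ) :
    ∑ k : Fin n, Complex.normSq (∑ m : Fin n, omg n ^ ((k : ℕ) * (m : ℕ)) * (x m : ℂ))
      = n * ∑ m : Fin n, x m ^ 2 := by
  have h := parseval_fiber_c hn x
  apply Complex.ofReal_injective
  push_cast
  simp_rw [← Complex.mul_conj]
  exact h

section AuxT3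

lemma domg_eq {n : ℕ} (a b : Fin n) : dftMatrix n a b = omg n ^ ((a : ℕ) * (b : ℕ)) := rfl

lemma hat_diag {r l n3 : ℕ} {S : T3 r l n3 ℝ} (hS : FDiag S) {p : Fin r} {j : Fin l}
    (h : (p : ℕ) ≠ (j : ℕ)) (k : Fin n3) : hatSlice S k p j = 0 := by
  unfold hatSlice
  refine Finset.sum_eq_zero fun m _ => ?_
  rw [hS p j m h]
  simp

lemma hat_tprod {n1 r l n3 : ℕ} (hn : n3 ≠ 0) (C : T3 n1 r n3 ℝ) (S : T3 r l n3 ℝ)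
    (k : Fin n3) (i : Fin n1) (j : Fin l) :
    hatSlice (tprod C S) k i j = ∑ p, hatSlice C k i p * hatSlice S k p j := by
  haveI : NeZero n3 := ⟨hn⟩
  have key : ∀ q t : Fin n3, omg n3 ^ ((k : ℕ) * ((t + q : Fin n3) : ℕ))
      = omg n3 ^ ((k : ℕ) * (t : ℕ)) * omg n3 ^ ((k : ℕ) * (q : ℕ)) := by
    intro q t
    rw [← pow_add]
    refine omg_pow_mod hn ?_
    have h1 : ((t + q : Fin n3) : ℕ) ≡ (t : ℕ) + (q : ℕ) [MOD n3] := by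
      rw [Fin.val_add]
      exact Nat.mod_modEq _ _
    calc (k : ℕ) * ((t + q : Fin n3) : ℕ)
        ≡ (k : ℕ) * ((t : ℕ) + (q : ℕ)) [MOD n3] := Nat.ModEq.mul_left _ h1
      _ = (k : ℕ) * (t : ℕ) + (k : ℕ) * (q : ℕ) := by ring
  have rhs : ∑ p : Fin r, hatSlice C k i p * hatSlice S k p j
      = ∑ p : Fin r, ∑ t : Fin n3, ∑ q : Fin n3,
          (omg n3 ^ ((k : ℕ) * (t : ℕ)) * (C i p t : ℂ)) *
          (omg n3 ^ ((k : ℕ) * (q : ℕ)) * (S p j q : ℂ)) := by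
    refine Finset.sum_congr rfl fun p _ => ?_
    simp only [hatSlice, domg_eq]
    rw [Finset.sum_mul_sum]
  rw [rhs]
  unfold hatSlice T3.tprod
  simp only [domg_eq]
  push_cast
  simp_rw [Finset.mul_sum]
  rw [Finset.sum_comm]
  conv_lhs => enter [2, q]; rw [Finset.sum_comm]
  rw [Finset.sum_comm]
  refine Finset.sum_congr rfl fun p _ => ?_
  have sub : ∀ q : Fin n3,
      ∑ m : Fin n3, omg n3 ^ ((k : ℕ) * (m : ℕ)) * ((C i p (m - q) : ℂ) * (S p j q : ℂ))
      = ∑ t : Fin n3, (omg n3 ^ ((k : ℕ) * (t : ℕ)) * (C i p t : ℂ)) *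
          (omg n3 ^ ((k : ℕ) * (q : ℕ)) * (S p j q : ℂ)) := by
    intro q
    rw [← Equiv.sum_comp (Equiv.addRight q)
      (fun m => omg n3 ^ ((k : ℕ) * (m : ℕ)) * ((C i p (m - q) : ℂ) * (S p j q : ℂ)))]
    refine Finset.sum_congr rfl fun t _ => ?_
    simp only [Equiv.coe_addRight]
    rw [add_sub_cancel_right, key q t]
    ring
  simp_rw [sub]
  rw [Finset.sum_comm]

lemma parseval_t {a b n3 : ℕ} (hn : n3 ≠ 0) (A : T3 a b n3 ℝ) :
    ∑ k : Fin n3, ∑ j : Fin b, ∑ i : Fin a, Complex.normSq (hatSlice A k i j)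
      = n3 * tInner A A := by
  rw [Finset.sum_comm]
  conv_lhs => enter [2, jj]; rw [Finset.sum_comm]
  have step : ∀ (jj : Fin b) (ii : Fin a),
      ∑ k : Fin n3, Complex.normSq (hatSlice A k ii jj) = n3 * ∑ m, A ii jj m ^ 2 := by
    intro jj ii
    simpa only [hatSlice, domg_eq] using parseval_fiber hn (fun m => A ii jj m)
  simp_rw [step, ← Finset.mul_sum]
  simp only [tInner]
  congr 1
  rw [Finset.sum_comm]
  refine Finset.sum_congr rfl fun i _ => Finset.sum_congr rfl fun j _ => ?_
  refine Finset.sum_congr rfl fun m _ => ?_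
  rw [pow_two]

end AuxT3

/-- for `C ∈ ℝ^{n1×r×n3}` and f-diagonal `S ∈ ℝ^{r×r×n3}`,
`‖C * S‖_F ≤ ‖C‖_{1,F} · ‖S‖_F`. -/
theorem stmt_11 (n1 r n3 : ℕ) (C : T3 n1 r n3 ℝ) (S : T3 r r n3 ℝ) (hS : FDiag S) :
    tNorm (tprod C S) ≤ norm1F C * tNorm S := by
  rcases Nat.eq_zero_or_pos n3 with h0 | hpos
  · subst h0
    have h1 : tNorm (tprod C S) = 0 := by simp [tNorm, tInner]
    rw [h1]
    exact mul_nonneg (Real.iSup_nonneg fun p => Real.sqrt_nonneg _) (Real.sqrt_nonneg _)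
  have hn : n3 ≠ 0 := hpos.ne'
  have hN0 : 0 ≤ norm1F C := Real.iSup_nonneg fun p => Real.sqrt_nonneg _
  have hcol : ∀ (jj : Fin r) (k : Fin n3),
      ∑ i, Complex.normSq (hatSlice C k i jj) ≤ norm1F C ^ 2 := by
    intro jj k
    have h1 : Real.sqrt (∑ i, ‖hatSlice C k i jj‖ ^ 2) ≤ norm1F C :=
      le_ciSup (Set.Finite.bddAbove (Set.finite_range
        (fun p : Fin r × Fin n3 => Real.sqrt (∑ i, ‖hatSlice C p.2 i p.1‖ ^ 2)))) (jj, k)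
    have h2 : (0:ℝ) ≤ ∑ i, ‖hatSlice C k i jj‖ ^ 2 :=
      Finset.sum_nonneg fun i _ => sq_nonneg _
    have h3 : ∑ i, ‖hatSlice C k i jj‖ ^ 2 ≤ norm1F C ^ 2 := by
      nlinarith [Real.sq_sqrt h2, Real.sqrt_nonneg (∑ i, ‖hatSlice C k i jj‖ ^ 2)]
    calc ∑ i, Complex.normSq (hatSlice C k i jj)
        = ∑ i, ‖hatSlice C k i jj‖ ^ 2 := by
          refine Finset.sum_congr rfl fun i _ => ?_
          rw [Complex.sq_norm]
      _ ≤ norm1F C ^ 2 := h3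
  have hpt : ∀ (k : Fin n3) (i : Fin n1) (jj : Fin r),
      hatSlice (tprod C S) k i jj = hatSlice C k i jj * hatSlice S k jj jj := by
    intro k i jj
    rw [hat_tprod hn]
    rw [Finset.sum_eq_single jj]
    · intro p _ hp
      rw [hat_diag hS (fun hv => hp (Fin.ext hv)) k, mul_zero]
    · intro h; exact absurd (Finset.mem_univ jj) h
  have main : (n3 : ℝ) * tInner (tprod C S) (tprod C S)
      ≤ norm1F C ^ 2 * ((n3 : ℝ) * tInner S S) := by
    rw [← parseval_t hn (tprod C S), ← parseval_t hn S]
    calc ∑ k, ∑ j, ∑ i, Complex.normSq (hatSlice (tprod C S) k i j)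
        = ∑ k, ∑ j, (∑ i, Complex.normSq (hatSlice C k i j)) *
            Complex.normSq (hatSlice S k j j) := by
          refine Finset.sum_congr rfl fun k _ => Finset.sum_congr rfl fun j _ => ?_
          rw [Finset.sum_mul]
          refine Finset.sum_congr rfl fun i _ => ?_
          rw [hpt k i j, Complex.normSq_mul]
      _ ≤ ∑ k, ∑ j, norm1F C ^ 2 * Complex.normSq (hatSlice S k j j) := by
          refine Finset.sum_le_sum fun k _ => Finset.sum_le_sum fun j _ => ?_
          exact mul_le_mul_of_nonneg_right (hcol j k) (Complex.normSq_nonneg _)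
      _ = norm1F C ^ 2 * ∑ k, ∑ j, Complex.normSq (hatSlice S k j j) := by
          simp [Finset.mul_sum]
      _ ≤ norm1F C ^ 2 * ∑ k, ∑ j, ∑ p, Complex.normSq (hatSlice S k p j) := by
          refine mul_le_mul_of_nonneg_left ?_ (sq_nonneg _)
          refine Finset.sum_le_sum fun k _ => Finset.sum_le_sum fun j _ => ?_
          exact Finset.single_le_sum (f := fun p => Complex.normSq (hatSlice S k p j)) (fun p _ => Complex.normSq_nonneg _) (Finset.mem_univ j)
  have hinner : tInner (tprod C S) (tprod C S) ≤ norm1F C ^ 2 * tInner S S := by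
    have hn3 : (0:ℝ) < n3 := by exact_mod_cast hpos
    nlinarith [main]
  rw [tNorm, tNorm]
  calc Real.sqrt (tInner (tprod C S) (tprod C S))
      ≤ Real.sqrt (norm1F C ^ 2 * tInner S S) := Real.sqrt_le_sqrt hinner
    _ = norm1F C * Real.sqrt (tInner S S) := by
        rw [Real.sqrt_mul (sq_nonneg _), Real.sqrt_sq hN0]
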